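/- arXiv:math/0508185 — 2 statements merged into one kernel-verified Lean document; each statement's English description precedes it below -/
import Mathlib

section
/- For all nonnegative integers u, v, d, the identity (1/u!) * \sum_{i=0}^{u} \binom{u}{i} (-1)^i * d(d+1)\cdots(d+i-1) / (v+d+i)! = \binom{u+v}{u} / (u+v+d)! holds, where the empty product (when i=0) equals 1. -/
open Finset

lemma pascal_sum (f : ℕ → ℚ) (u : ℕ) :
    ∑ i ∈ range (u + 2), ((u + 1).choose i : ℚ) * f i
    = ∑ i ∈ range (u + 1), (u.choose i : ℚ) * f i
      + ∑ i ∈ range (u + 1), (u.choose i : ℚ) * f (i + 1) := by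
  rw [Finset.sum_range_succ' _ (u + 1)]
  have h : ∀ i, ((u + 1).choose (i + 1) : ℚ) * f (i + 1)
      = (u.choose i : ℚ) * f (i + 1) + (u.choose (i + 1) : ℚ) * f (i + 1) := by
    intro i
    rw [Nat.choose_succ_succ]
    push_cast
    ring
  rw [Finset.sum_congr rfl fun i _ => h i, Finset.sum_add_distrib]
  have h2 : ∑ i ∈ range (u + 1), (u.choose (i + 1) : ℚ) * f (i + 1) + ((u + 1).choose 0 : ℚ) * f 0
      = ∑ i ∈ range (u + 1), (u.choose i : ℚ) * f i := by
    have := Finset.sum_range_succ' (fun i => (u.choose i : ℚ) * f i) (u + 1)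
    rw [Finset.sum_range_succ] at this
    simp only [Nat.choose_succ_self, Nat.cast_zero, zero_mul, add_zero] at this
    simpa using this.symm
  linarith [h2]

lemma key (u v : ℕ) : ∀ d : ℕ,
    ∑ i ∈ Finset.range (u + 1),
        (u.choose i : ℚ) * (-1) ^ i * (d.ascFactorial i : ℚ) / ((v + d + i).factorial : ℚ)
    = (u.factorial : ℚ) * ((u + v).choose u : ℚ) / ((u + v + d).factorial : ℚ) := by
  induction u with
  | zero => intro d; simp
  | succ u ih =>
    intro d
    have hps := pascal_sum (fun i => (-1 : ℚ) ^ i * (d.ascFactorial i : ℚ) / ((v + d + i).factorial : ℚ)) u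
    simp only [mul_div_assoc, mul_assoc] at hps ⊢
    rw [show u + 1 + 1 = u + 2 from rfl, hps]
    have h2 : ∑ i ∈ range (u + 1), (u.choose i : ℚ) *
        ((-1) ^ (i + 1) * ((d.ascFactorial (i + 1) : ℚ) / ((v + d + (i + 1)).factorial : ℚ)))
        = -(d : ℚ) * ∑ i ∈ range (u + 1), (u.choose i : ℚ) *
            ((-1) ^ i * (((d+1).ascFactorial i : ℚ) / ((v + (d + 1) + i).factorial : ℚ))) := by
      rw [Finset.mul_sum]
      refine Finset.sum_congr rfl fun i _ => ?_
      have hasc : (d.ascFactorial (i + 1) : ℚ) = (d : ℚ) * ((d + 1).ascFactorial i : ℚ) := by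
        have : d * (d + 1).ascFactorial i = d.ascFactorial (i + 1) := by
          rw [Nat.ascFactorial_succ, ← Nat.succ_ascFactorial]
        rw [← this]; push_cast; ring
      have hidx : v + d + (i + 1) = v + (d + 1) + i := by omega
      rw [hasc, hidx]
      ring
    rw [h2]
    have ih1 := ih d
    have ih2 := ih (d + 1)
    simp only [mul_div_assoc, mul_assoc] at ih1 ih2
    rw [ih1, ih2]
    have hfac : ((u + v + (d + 1)).factorial : ℚ) = ((u + v + d : ℕ) + 1) * ((u + v + d).factorial : ℚ) := by
      rw [show u + v + (d + 1) = (u + v + d) + 1 from rfl, Nat.factorial_succ]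
      push_cast; ring
    have hfac2 : ((u + 1 + v + d).factorial : ℚ) = ((u + v + d : ℕ) + 1) * ((u + v + d).factorial : ℚ) := by
      rw [show u + 1 + v + d = (u + v + d) + 1 by omega, Nat.factorial_succ]
      push_cast; ring
    have hch : ((u + 1).factorial : ℚ) * ((u + 1 + v).choose (u + 1) : ℚ)
        = ((u + v : ℕ) + 1) * ((u.factorial : ℚ) * ((u + v).choose u : ℚ)) := by
      have : (u + v + 1) * ((u + v).choose u) = (u + v + 1).choose (u + 1) * (u + 1) :=
        Nat.add_one_mul_choose_eq (u + v) u
      have h3 : (u + 1).factorial * ((u + 1 + v).choose (u + 1))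
          = (u + v + 1) * (u.factorial * ((u + v).choose u)) := by
        rw [show u + 1 + v = u + v + 1 by omega, Nat.factorial_succ]
        calc (u + 1) * u.factorial * ((u + v + 1).choose (u + 1))
            = u.factorial * ((u + v + 1).choose (u + 1) * (u + 1)) := by ring
          _ = u.factorial * ((u + v + 1) * ((u + v).choose u)) := by rw [← this]
          _ = (u + v + 1) * (u.factorial * ((u + v).choose u)) := by ring
      exact_mod_cast congrArg (Nat.cast : ℕ → ℚ) h3
    rw [hfac, hfac2]
    have hne : ((u + v + d : ℕ) : ℚ) + 1 ≠ 0 := by positivity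
    have hne2 : ((u + v + d).factorial : ℚ) ≠ 0 := by exact_mod_cast (u+v+d).factorial_ne_zero
    field_simp
    push_cast at hch ⊢
    linear_combination (-1 : ℚ) * hch

/-- For all nonnegative integers `u, v, d`,
`(1/u!) * ∑_{i=0}^{u} C(u,i) (-1)^i d(d+1)⋯(d+i-1) / (v+d+i)! = C(u+v,u) / (u+v+d)!`,
where the rising factorial of length 0 is 1. -/
theorem stmt_0 (u v d : ℕ) :
    (1 / (u.factorial : ℚ)) *
      ∑ i ∈ Finset.range (u + 1),
        (u.choose i : ℚ) * (-1) ^ i * (d.ascFactorial i : ℚ) / ((v + d + i).factorial : ℚ)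
    = ((u + v).choose u : ℚ) / ((u + v + d).factorial : ℚ) := by
  rw [key u v d]
  have : (u.factorial : ℚ) ≠ 0 := by exact_mod_cast u.factorial_ne_zero
  field_simp
end

section
/- For real c > 0, x > 0, and integer k \geq 1, the contour integral (1/(2\pi i)) \int_{(c)} x^s / s^{k+1} ds equals 0 if 0 < x \leq 1 and equals (\log x)^k / k! if x \geq 1, where (c) denotes the vertical line Re(s) = c. -/
open Complex Filter
open MeasureTheory Set FourierTransform Real
open scoped Topology

lemma auxT (z : ℂ) (hz : 0 < z.re) (m : ℕ) :
    Tendsto (fun u : ℝ => (u : ℂ) ^ m * Complex.exp (-z * u)) atTop (𝓝 0) := by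
  rw [tendsto_zero_iff_norm_tendsto_zero]
  have h := tendsto_rpow_mul_exp_neg_mul_atTop_nhds_zero m z.re hz
  refine h.congr' ?_
  filter_upwards [eventually_gt_atTop (0:ℝ)] with u hu
  rw [Real.rpow_natCast]
  simp [map_mul, Complex.norm_exp, abs_of_pos hu, mul_comm]

lemma auxA (z : ℂ) (hz : 0 < z.re) (k : ℕ) :
    IntegrableOn (fun u : ℝ => (u : ℂ) ^ k * Complex.exp (-z * u)) (Ioi 0) := by
  have h1 : IntegrableOn (fun u : ℝ => u ^ k * Real.exp (-z.re * u)) (Ioi 0) := by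
    apply integrable_of_isBigO_exp_neg (half_pos hz) (by fun_prop)
      (f := fun u : ℝ => u ^ k * Real.exp (-z.re * u)) (b := z.re / 2)
    have h2 : Tendsto (fun u : ℝ => u ^ (k:ℝ) * Real.exp (-(z.re/2) * u)) atTop (𝓝 0) :=
      tendsto_rpow_mul_exp_neg_mul_atTop_nhds_zero k (z.re/2) (half_pos hz)
    have h3 := (h2.isBigO_one ℝ).mul
      (Asymptotics.isBigO_refl (fun u : ℝ => Real.exp (-(z.re/2) * u)) atTop)
    refine h3.congr' ?_ ?_
    · filter_upwards [eventually_gt_atTop (0:ℝ)] with u hu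
      rw [Real.rpow_natCast, mul_assoc, ← Real.exp_add]
      ring_nf
    · filter_upwards with u
      rw [one_mul, neg_mul]
  refine (h1.mono' ((by fun_prop : Continuous fun u : ℝ =>
    (u : ℂ) ^ k * Complex.exp (-z * u)).aestronglyMeasurable) ?_)
  filter_upwards [ae_restrict_mem measurableSet_Ioi] with u hu
  simp [map_mul, map_pow, Complex.norm_real, Complex.norm_exp,
    abs_of_pos (show (0:ℝ) < u from hu), Complex.mul_re]

lemma auxD (z : ℂ) (hz0 : z ≠ 0) (m : ℕ) (u : ℝ) :
    HasDerivAt (fun v : ℝ => -((v : ℂ) ^ (m+1) * Complex.exp (-z * v)) / z)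
      ((u:ℂ) ^ (m+1) * Complex.exp (-z * u)
        - (((m:ℂ)+1) / z) * ((u:ℂ) ^ m * Complex.exp (-z * u))) u := by
  have he : HasDerivAt (fun w : ℂ => Complex.exp (-z * w)) (Complex.exp (-z * u) * (-z)) u := by
    simpa using ((hasDerivAt_id (u:ℂ)).const_mul (-z)).cexp
  have h1 := ((hasDerivAt_pow (m+1) (u : ℂ)).mul he).neg.div_const z
  have h2 := h1.comp_ofReal
  convert h2 using 1
  · rfl
  simp only [Nat.add_sub_cancel]
  push_cast
  field_simp
  ring

lemma auxB (z : ℂ) (hz : 0 < z.re) : ∀ k : ℕ,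
    ∫ u in Ioi (0:ℝ), (u : ℂ) ^ k * Complex.exp (-z * u) = k.factorial / z ^ (k + 1) := by
  have hz0 : z ≠ 0 := fun h => by simp [h] at hz
  have key : ∀ m : ℕ, (∫ u in Ioi (0:ℝ), (u : ℂ) ^ (m+1) * Complex.exp (-z * u))
      - (((m:ℂ)+1) / z) * ∫ u in Ioi (0:ℝ), (u : ℂ) ^ m * Complex.exp (-z * u) = 0 := by
    intro m
    have hcont : ContinuousWithinAt
        (fun v : ℝ => -((v : ℂ) ^ (m+1) * Complex.exp (-z * v)) / z) (Ici 0) 0 :=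
      Continuous.continuousWithinAt (by fun_prop)
    have htend : Tendsto (fun v : ℝ => -((v : ℂ) ^ (m+1) * Complex.exp (-z * v)) / z)
        atTop (𝓝 0) := by
      have := ((auxT z hz (m+1)).neg).div_const z
      simpa using this
    have h := integral_Ioi_of_hasDerivAt_of_tendsto hcont
      (fun u _ => auxD z hz0 m u)
      (((auxA z hz (m+1)).sub (((auxA z hz m)).const_mul _))) htend
    rw [integral_sub (auxA z hz (m+1)) ((auxA z hz m).const_mul _),
      integral_const_mul] at h
    simpa using h
  intro k; induction k with
  | zero =>
    have hcont : ContinuousWithinAt (fun v : ℝ => -Complex.exp (-z * v) / z) (Ici 0) 0 :=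
      Continuous.continuousWithinAt (by fun_prop)
    have hder : ∀ u ∈ Ioi (0:ℝ), HasDerivAt (fun v : ℝ => -Complex.exp (-z * v) / z)
        ((u:ℂ) ^ 0 * Complex.exp (-z * u)) u := by
      intro u _
      have he : HasDerivAt (fun w : ℂ => Complex.exp (-z * w))
          (Complex.exp (-z * u) * (-z)) (u:ℂ) := by
        simpa using ((hasDerivAt_id (u:ℂ)).const_mul (-z)).cexp
      have h2 := (he.neg.div_const z).comp_ofReal
      convert h2 using 1
      · rfl
      field_simp
    have htend : Tendsto (fun v : ℝ => -Complex.exp (-z * v) / z) atTop (𝓝 0) := by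
      have := ((auxT z hz 0).neg).div_const z
      simpa using this
    have h := integral_Ioi_of_hasDerivAt_of_tendsto hcont hder (auxA z hz 0) htend
    simp only [neg_div, neg_neg] at h
    simpa [neg_div] using h
  | succ k ih =>
    have h := key k
    rw [ih, sub_eq_zero] at h
    rw [h, Nat.factorial_succ, div_mul_div_comm, ← pow_succ']
    push_cast
    ring

lemma auxNorm (c b : ℝ) (hc : 0 < c) (hb : 0 < b) (k : ℕ) (hk : 1 ≤ k) (t : ℝ) :
    ‖((c:ℂ) + (b*t : ℝ) * I) ^ (k+1)‖⁻¹ ≤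
      (c ^ (k-1) * min (c^2) (b^2))⁻¹ * (1+t^2)⁻¹ := by
  have hA : ‖(c:ℂ) + (b*t : ℝ) * I‖ = Real.sqrt (c^2 + (b*t)^2) := by
    exact_mod_cast Complex.norm_add_mul_I c (b*t)
  have hAc : c ≤ ‖(c:ℂ) + (b*t : ℝ) * I‖ := by
    rw [hA]
    apply Real.le_sqrt' hc |>.mpr
    nlinarith [sq_nonneg (b*t)]
  have hA2 : ‖(c:ℂ) + (b*t : ℝ) * I‖ ^ 2 = c^2 + (b*t)^2 := by
    rw [hA, Real.sq_sqrt]; positivity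
  have hmin : min (c^2) (b^2) * (1+t^2) ≤ c^2 + (b*t)^2 := by
    have h1 : min (c^2) (b^2) ≤ c^2 := min_le_left _ _
    have h2 : min (c^2) (b^2) ≤ b^2 := min_le_right _ _
    nlinarith [sq_nonneg t]
  have hlow : c ^ (k-1) * (min (c^2) (b^2) * (1+t^2)) ≤ ‖((c:ℂ) + (b*t : ℝ) * I) ^ (k+1)‖ := by
    rw [norm_pow]
    have hsplit : ‖(c:ℂ) + (b*t : ℝ) * I‖ ^ (k+1)
        = ‖(c:ℂ) + (b*t : ℝ) * I‖ ^ (k-1) * ‖(c:ℂ) + (b*t : ℝ) * I‖ ^ 2 := by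
      rw [← pow_add]
      congr 1
      omega
    rw [hsplit, hA2]
    exact mul_le_mul (pow_le_pow_left₀ hc.le hAc _) hmin (by positivity) (by positivity)
  have hpos : (0:ℝ) < c ^ (k-1) * (min (c^2) (b^2) * (1+t^2)) := by positivity
  rw [← mul_inv, mul_assoc]
  exact inv_anti₀ hpos hlow

lemma auxInt (c b : ℝ) (hc : 0 < c) (hb : 0 < b) (k : ℕ) (hk : 1 ≤ k) (f : ℝ → ℂ)
    (hmeas : AEStronglyMeasurable f volume) (K : ℝ) (hK : 0 ≤ K)
    (hbound : ∀ t, ‖f t‖ ≤ K * ‖((c:ℂ) + (b*t : ℝ) * I) ^ (k+1)‖⁻¹) :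
    Integrable f := by
  apply Integrable.mono' (g := fun t => (K * (c ^ (k-1) * min (c^2) (b^2))⁻¹) * (1+t^2)⁻¹)
    (integrable_inv_one_add_sq.const_mul _) hmeas
  filter_upwards with t
  calc ‖f t‖ ≤ K * ‖((c:ℂ) + (b*t : ℝ) * I) ^ (k+1)‖⁻¹ := hbound t
    _ ≤ K * ((c ^ (k-1) * min (c^2) (b^2))⁻¹ * (1+t^2)⁻¹) := by
        gcongr
        exact auxNorm c b hc hb k hk t
    _ = (K * (c ^ (k-1) * min (c^2) (b^2))⁻¹) * (1+t^2)⁻¹ := by ring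

noncomputable def gfun (c : ℝ) (k : ℕ) : ℝ → ℂ := fun u =>
  if 0 ≤ u then (u:ℂ) ^ k * Complex.exp (-(c:ℂ) * u) / (k.factorial : ℂ) else 0

lemma auxG_cont (c : ℝ) (k : ℕ) (hk : 1 ≤ k) : Continuous (gfun c k) := by
  unfold gfun
  refine continuous_if ?_ (Continuous.continuousOn (by fun_prop)) continuous_const.continuousOn
  intro a ha
  have : a = 0 := by
    have h1 : {x : ℝ | 0 ≤ x} = Ici 0 := rfl
    rw [h1, frontier_Ici] at ha
    simpa using ha
  subst this
  simp [zero_pow (by omega : k ≠ 0)]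

lemma auxG_ind (c : ℝ) (k : ℕ) : gfun c k =
    Set.indicator (Ici 0) (fun u : ℝ => (u:ℂ) ^ k * Complex.exp (-(c:ℂ) * u) / (k.factorial : ℂ)) := by
  ext u
  simp [gfun, Set.indicator_apply]

lemma auxG_int (c : ℝ) (hc : 0 < c) (k : ℕ) : Integrable (gfun c k) := by
  rw [auxG_ind, integrable_indicator_iff measurableSet_Ici]
  refine Iff.mpr integrableOn_Ici_iff_integrableOn_Ioi ?_
  exact (auxA (c:ℂ) (by simpa using hc) k).div_const _

lemma auxFg (c : ℝ) (hc : 0 < c) (k : ℕ) (ξ : ℝ) :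
    𝓕 (gfun c k) ξ = (((c:ℂ) + (2*Real.pi*ξ : ℝ) * I) ^ (k+1))⁻¹ := by
  set z : ℂ := (c:ℂ) + (2*Real.pi*ξ : ℝ) * I with hz
  have hzre : 0 < z.re := by simpa [hz] using hc
  rw [Real.fourier_real_eq_integral_exp_smul]
  have key : ∀ v : ℝ, Complex.exp (↑(-2 * Real.pi * v * ξ) * I) • gfun c k v
      = Set.indicator (Ici 0)
          (fun v : ℝ => ((v:ℂ) ^ k * Complex.exp (-z * v)) / (k.factorial : ℂ)) v := by
    intro v
    by_cases h : 0 ≤ v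
    · rw [Set.indicator_of_mem (mem_Ici.mpr h)]
      simp only [gfun, if_pos h, smul_eq_mul]
      rw [div_eq_mul_inv, div_eq_mul_inv, ← mul_assoc, mul_comm (Complex.exp _),
        mul_assoc ((v:ℂ)^k), ← Complex.exp_add]
      congr 2
      push_cast [hz]
      ring
    · rw [Set.indicator_of_notMem (by simpa using h)]
      simp [gfun, if_neg h]
  rw [MeasureTheory.integral_congr_ae (Eventually.of_forall key),
    MeasureTheory.integral_indicator measurableSet_Ici, MeasureTheory.integral_Ici_eq_integral_Ioi,
    MeasureTheory.integral_div, auxB z hzre k]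
  rw [div_right_comm, div_self (by exact_mod_cast k.factorial_ne_zero : (k.factorial:ℂ) ≠ 0), one_div]


/-- For real `c > 0`, `x > 0` and integer `k ≥ 1`, the principal-value contour integral
`(1/(2πi)) ∫_(c) x^s / s^{k+1} ds` over the vertical line `Re s = c` equals `0` if
`0 < x ≤ 1` and `(log x)^k / k!` if `x ≥ 1`. -/
theorem stmt_9 (c x : ℝ) (hc : 0 < c) (hx : 0 < x) (k : ℕ) (hk : 1 ≤ k) :
    Tendsto
      (fun T : ℝ =>
        ((1 / (2 * Real.pi) : ℝ) : ℂ) *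
          ∫ t in (-T)..T,
            (x : ℂ) ^ ((c : ℂ) + t * Complex.I) / ((c : ℂ) + t * Complex.I) ^ (k + 1))
      atTop
      (nhds (if 1 ≤ x then (((Real.log x) ^ k / k.factorial : ℝ) : ℂ) else 0)) := by
  have hπ : (0:ℝ) < 2 * Real.pi := by positivity
  set y := Real.log x with hy
  have hxne : (x:ℂ) ≠ 0 := ofReal_ne_zero.mpr hx.ne'
  have hzne : ∀ t : ℝ, ((c:ℂ) + (t:ℂ) * I) ≠ 0 := by
    intro t h
    have := congrArg Complex.re h
    simp at this
    exact hc.ne' this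
  set f : ℝ → ℂ := fun t => (x : ℂ) ^ ((c : ℂ) + t * I) / ((c : ℂ) + t * I) ^ (k + 1) with hf
  -- integrability of f
  have hfmeas : AEStronglyMeasurable f volume := by
    apply Continuous.aestronglyMeasurable
    apply Continuous.div
    · exact Continuous.const_cpow (by fun_prop) (Or.inl hxne)
    · fun_prop
    · exact fun t => pow_ne_zero _ (hzne t)
  have hfbound : ∀ t, ‖f t‖ ≤ x ^ c * ‖((c:ℂ) + ((1:ℝ)*t : ℝ) * I) ^ (k+1)‖⁻¹ := by
    intro t
    rw [one_mul, hf]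
    simp only [norm_div]
    rw [Complex.norm_cpow_eq_rpow_re_of_pos hx, div_eq_mul_inv]
    have hre : ((c:ℂ) + (t:ℂ) * I).re = c := by simp
    rw [hre]
  have hfint : Integrable f :=
    auxInt c 1 hc one_pos k hk f hfmeas (x ^ c) (Real.rpow_nonneg hx.le c)
      (by exact_mod_cast hfbound)
  -- the limit statement, given the value of the full integral
  have hten := (MeasureTheory.intervalIntegral_tendsto_integral hfint
      tendsto_neg_atTop_atBot tendsto_id).const_mul ((1 / (2 * Real.pi) : ℝ) : ℂ)
  refine Tendsto.congr' (Eventually.of_forall fun T => rfl) ?_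
  suffices hval : ((1 / (2 * Real.pi) : ℝ) : ℂ) * (∫ t, f t) =
      (if 1 ≤ x then (((y) ^ k / k.factorial : ℝ) : ℂ) else 0) by
    rw [← hval]; exact hten
  -- 𝓕 g integrable
  have hFgint : Integrable (𝓕 (gfun c k)) := by
    have heq : 𝓕 (gfun c k) = fun ξ => (((c:ℂ) + (2*Real.pi*ξ : ℝ) * I) ^ (k+1))⁻¹ :=
      funext (auxFg c hc k)
    rw [heq]
    apply auxInt c (2*Real.pi) hc hπ k hk _ ?_ 1 zero_le_one
    · intro t
      rw [norm_inv, one_mul]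
    · apply Continuous.aestronglyMeasurable
      apply Continuous.inv₀ (by fun_prop)
      intro t
      apply pow_ne_zero
      intro h
      have := congrArg Complex.re h
      simp at this
      exact hc.ne' this
  -- inversion
  have hinv : 𝓕⁻ (𝓕 (gfun c k)) y = gfun c k y :=
    (auxG_int c hc k).fourierInv_fourier_eq hFgint ((auxG_cont c k hk).continuousAt)
  rw [fourierInv_eq_fourier_neg,
    Real.fourier_real_eq_integral_exp_smul] at hinv
  -- change of variables in ∫ f
  have hcv : (∫ t, f t) = (2*Real.pi : ℝ) • ∫ ξ, f ((2*Real.pi) * ξ) := by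
    rw [MeasureTheory.Measure.integral_comp_mul_left f (2*Real.pi), abs_of_pos (by positivity),
      smul_smul, mul_inv_cancel₀ hπ.ne', one_smul]
  -- pointwise identity under the ξ-integral
  have hpt : ∀ ξ : ℝ, f ((2*Real.pi) * ξ) =
      Complex.exp ((c:ℂ) * y) *
        (Complex.exp (↑(-2 * Real.pi * ξ * (-y)) * I) • 𝓕 (gfun c k) ξ) := by
    intro ξ
    rw [auxFg c hc k ξ, smul_eq_mul]
    have hcpow : (x : ℂ) ^ ((c : ℂ) + ((2*Real.pi*ξ : ℝ):ℂ) * I)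
        = Complex.exp ((c:ℂ) * y) * Complex.exp (↑(-2 * Real.pi * ξ * (-y)) * I) := by
      rw [Complex.cpow_def_of_ne_zero hxne, ← Complex.ofReal_log hx.le, ← Complex.exp_add]
      congr 1
      push_cast
      ring
    rw [show f ((2*Real.pi)*ξ) = (x:ℂ) ^ ((c:ℂ) + ((2*Real.pi*ξ : ℝ):ℂ) * I)
        / ((c:ℂ) + ((2*Real.pi*ξ : ℝ):ℂ) * I) ^ (k+1) from rfl, hcpow, div_eq_mul_inv]
    ring
  rw [hcv, MeasureTheory.integral_congr_ae (Eventually.of_forall hpt),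
    MeasureTheory.integral_const_mul, hinv]
  -- final evaluation
  rcases le_or_gt 1 x with hx1 | hx1
  · rw [if_pos hx1]
    have hy0 : 0 ≤ y := Real.log_nonneg hx1
    simp only [gfun, if_pos hy0]
    rw [Complex.real_smul]
    rw [← mul_assoc, ← Complex.ofReal_mul, one_div, inv_mul_cancel₀ hπ.ne', Complex.ofReal_one,
      one_mul]
    have hprod : Complex.exp ((c:ℂ) * y) * ((y:ℂ) ^ k * Complex.exp (-(c:ℂ) * y) / (k.factorial : ℂ))
        = (Complex.exp ((c:ℂ) * y) * Complex.exp (-(c:ℂ) * y)) * ((y:ℂ) ^ k / (k.factorial : ℂ)) := by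
      ring
    rw [hprod, ← Complex.exp_add, show (c:ℂ) * y + -(c:ℂ) * y = 0 by ring, Complex.exp_zero,
      one_mul]
    push_cast
    ring
  · rw [if_neg (not_le.mpr hx1)]
    have hy0 : ¬ (0 ≤ y) := not_le.mpr (Real.log_neg hx hx1)
    simp [gfun, if_neg hy0]
end
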